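/- If t₁ = 0 and t₂ = 1−c (the middle-(1−2c) Cantor set construction), then for all p, q ∈ (0,1) with p ≠ q and all self-similar measures μ_p and μ_q, the first Wasserstein distance satisfies W₁(μ_p, μ_q) = |p−q|; in particular it does not depend on the contraction parameter c. -/

import Mathlib

open MeasureTheory

/-- The first Wasserstein distance: the infimum over couplings of μ and ν of the
first moment ∫ |x − y| dγ. -/
noncomputable def wasserstein1 (μ ν : Measure ℝ) : ℝ :=
  sInf { a : ℝ | ∃ γ : Measure (ℝ × ℝ), IsProbabilityMeasure γ ∧
    γ.map Prod.fst = μ ∧ γ.map Prod.snd = ν ∧ a = ∫ z : ℝ × ℝ, |z.1 - z.2| ∂γ }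


lemma ae_mem_of_compl_zero {α : Type*} [MeasurableSpace α] (μ : Measure α) {s : Set α}
    (h : μ sᶜ = 0) : ∀ᵐ x ∂μ, x ∈ s := by
  rw [ae_iff]; exact h

lemma integrable_absdiff (γ : Measure (ℝ × ℝ)) [IsFiniteMeasure γ]
    (h : γ ((Set.Icc (0:ℝ) 1 ×ˢ Set.Icc (0:ℝ) 1)ᶜ) = 0) :
    Integrable (fun z : ℝ × ℝ => |z.1 - z.2|) γ := by
  refine (integrable_const (1:ℝ)).mono' ?_ ?_
  · exact (measurable_fst.sub measurable_snd).abs.aestronglyMeasurable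
  · filter_upwards [ae_mem_of_compl_zero γ h] with z hz
    obtain ⟨⟨h1, h2⟩, h3, h4⟩ := hz
    rw [Real.norm_eq_abs, abs_abs, abs_sub_le_iff]
    constructor <;> linarith

lemma integrable_id_of_supp (μ : Measure ℝ) [IsFiniteMeasure μ]
    (h : μ ((Set.Icc (0:ℝ) 1)ᶜ) = 0) : Integrable (fun x : ℝ => x) μ := by
  refine (integrable_const (1:ℝ)).mono' measurable_id'.aestronglyMeasurable ?_
  filter_upwards [ae_mem_of_compl_zero μ h] with x hx
  rw [Real.norm_eq_abs, abs_le]; exact ⟨by linarith [hx.1], hx.2⟩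

lemma mean_self_similar (c : ℝ) (hc : c ∈ Set.Ioc (0:ℝ) (1/2))
    (p : ℝ) (hp : p ∈ Set.Ioo (0:ℝ) 1)
    (μp : Measure ℝ) (hμp : IsProbabilityMeasure μp)
    (hsuppp : μp ((Set.Icc (0:ℝ) 1)ᶜ) = 0)
    (hssp : μp = ENNReal.ofReal p • μp.map (fun x : ℝ => c * x)
               + ENNReal.ofReal (1 - p) • μp.map (fun x : ℝ => c * x + (1 - c))) :
    ∫ x, x ∂μp = 1 - p := by
  have hint : Integrable (fun x : ℝ => x) μp := integrable_id_of_supp μp hsuppp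
  set m := ∫ x, x ∂μp with hm
  have hS1 : ∫ x, x ∂(μp.map (fun x : ℝ => c * x)) = c * m := by
    rw [integral_map (measurable_const_mul c).aemeasurable
      measurable_id'.aestronglyMeasurable, integral_const_mul]
  have hS2 : ∫ x, x ∂(μp.map (fun x : ℝ => c * x + (1 - c))) = c * m + (1 - c) := by
    rw [integral_map ((measurable_const_mul c).add_const (1-c)).aemeasurable
      measurable_id'.aestronglyMeasurable]
    rw [integral_add (hint.const_mul c) (integrable_const _), integral_const_mul,
      integral_const]
    simp [hm]
  have hi1 : Integrable (fun x : ℝ => x) (μp.map (fun x : ℝ => c * x)) := by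
    rw [integrable_map_measure measurable_id'.aestronglyMeasurable
      (measurable_const_mul c).aemeasurable]
    exact hint.const_mul c
  have hi2 : Integrable (fun x : ℝ => x) (μp.map (fun x : ℝ => c * x + (1 - c))) := by
    rw [integrable_map_measure measurable_id'.aestronglyMeasurable
      ((measurable_const_mul c).add_const (1-c)).aemeasurable]
    exact (hint.const_mul c).add (integrable_const _)
  have key : m = p * (c * m) + (1 - p) * (c * m + (1 - c)) := by
    conv_lhs => rw [hm, hssp]
    rw [integral_add_measure (hi1.smul_measure ENNReal.ofReal_ne_top)
      (hi2.smul_measure ENNReal.ofReal_ne_top), integral_smul_measure, integral_smul_measure,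
      ENNReal.toReal_ofReal hp.1.le, ENNReal.toReal_ofReal (by linarith [hp.2]), hS1, hS2]
    simp [smul_eq_mul]
  have hc1 : c < 1 := lt_of_le_of_lt hc.2 (by norm_num)
  have : m * (1 - c) = (1 - p) * (1 - c) := by nlinarith [key]
  have h0 : (1 : ℝ) - c ≠ 0 := by linarith
  field_simp at this
  nlinarith [this]

lemma prod_supp_zero (μ ν : Measure ℝ) [IsFiniteMeasure μ] [IsFiniteMeasure ν]
    {s t : Set ℝ} (hs : MeasurableSet s) (ht : MeasurableSet t)
    (hμ : μ sᶜ = 0) (hν : ν tᶜ = 0) : (μ.prod ν) ((s ×ˢ t)ᶜ) = 0 := by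
  rw [Set.compl_prod_eq_union]
  refine le_antisymm (le_trans (measure_union_le _ _) ?_) zero_le
  rw [Measure.prod_prod, Measure.prod_prod, hμ, hν]
  simp

lemma fst_mem_ae (γ : Measure (ℝ × ℝ)) (μ : Measure ℝ)
    (h1 : γ.map Prod.fst = μ) (hs : μ ((Set.Icc (0:ℝ) 1)ᶜ) = 0) :
    ∀ᵐ z ∂γ, z.1 ∈ Set.Icc (0:ℝ) 1 := by
  have : γ (Prod.fst ⁻¹' (Set.Icc (0:ℝ) 1)ᶜ) = 0 := by
    rw [← Measure.map_apply measurable_fst measurableSet_Icc.compl, h1]; exact hs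
  rw [ae_iff]; exact this

lemma snd_mem_ae (γ : Measure (ℝ × ℝ)) (ν : Measure ℝ)
    (h2 : γ.map Prod.snd = ν) (hs : ν ((Set.Icc (0:ℝ) 1)ᶜ) = 0) :
    ∀ᵐ z ∂γ, z.2 ∈ Set.Icc (0:ℝ) 1 := by
  have : γ (Prod.snd ⁻¹' (Set.Icc (0:ℝ) 1)ᶜ) = 0 := by
    rw [← Measure.map_apply measurable_snd measurableSet_Icc.compl, h2]; exact hs
  rw [ae_iff]; exact this

lemma cost_ge (γ : Measure (ℝ × ℝ)) [IsProbabilityMeasure γ] (μ ν : Measure ℝ)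
    (hsμ : μ ((Set.Icc (0:ℝ) 1)ᶜ) = 0) (hsν : ν ((Set.Icc (0:ℝ) 1)ᶜ) = 0)
    (h1 : γ.map Prod.fst = μ) (h2 : γ.map Prod.snd = ν) :
    |(∫ x, x ∂μ) - ∫ x, x ∂ν| ≤ ∫ z : ℝ × ℝ, |z.1 - z.2| ∂γ := by
  have ha1 := fst_mem_ae γ μ h1 hsμ
  have ha2 := snd_mem_ae γ ν h2 hsν
  have hi1 : Integrable (fun z : ℝ × ℝ => z.1) γ := by
    refine (integrable_const (1:ℝ)).mono' measurable_fst.aestronglyMeasurable ?_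
    filter_upwards [ha1] with z hz
    rw [Real.norm_eq_abs, abs_le]; exact ⟨by linarith [hz.1], hz.2⟩
  have hi2 : Integrable (fun z : ℝ × ℝ => z.2) γ := by
    refine (integrable_const (1:ℝ)).mono' measurable_snd.aestronglyMeasurable ?_
    filter_upwards [ha2] with z hz
    rw [Real.norm_eq_abs, abs_le]; exact ⟨by linarith [hz.1], hz.2⟩
  have e1 : ∫ z : ℝ × ℝ, z.1 ∂γ = ∫ x, x ∂μ := by
    rw [← h1, integral_map measurable_fst.aemeasurable measurable_id'.aestronglyMeasurable]
  have e2 : ∫ z : ℝ × ℝ, z.2 ∂γ = ∫ x, x ∂ν := by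
    rw [← h2, integral_map measurable_snd.aemeasurable measurable_id'.aestronglyMeasurable]
  calc |(∫ x, x ∂μ) - ∫ x, x ∂ν| = |∫ z : ℝ × ℝ, (z.1 - z.2) ∂γ| := by
        rw [integral_sub hi1 hi2, e1, e2]
    _ ≤ ∫ z : ℝ × ℝ, |z.1 - z.2| ∂γ := by
        simpa [Real.norm_eq_abs] using norm_integral_le_integral_norm (fun z : ℝ × ℝ => z.1 - z.2) (μ := γ)
set_option maxHeartbeats 1000000 in
lemma exists_good_coupling (c : ℝ) (hc : c ∈ Set.Ioc (0:ℝ) (1/2))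
    (p q : ℝ) (hp : p ∈ Set.Ioo (0:ℝ) 1) (hq : q ∈ Set.Ioo (0:ℝ) 1) (hlt : q < p)
    (μp : Measure ℝ) (hμp : IsProbabilityMeasure μp)
    (hsuppp : μp ((Set.Icc (0:ℝ) 1)ᶜ) = 0)
    (hssp : μp = ENNReal.ofReal p • μp.map (fun x : ℝ => c * x)
               + ENNReal.ofReal (1 - p) • μp.map (fun x : ℝ => c * x + (1 - c)))
    (μq : Measure ℝ) (hμq : IsProbabilityMeasure μq)
    (hsuppq : μq ((Set.Icc (0:ℝ) 1)ᶜ) = 0)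
    (hssq : μq = ENNReal.ofReal q • μq.map (fun x : ℝ => c * x)
               + ENNReal.ofReal (1 - q) • μq.map (fun x : ℝ => c * x + (1 - c))) :
    ∀ n : ℕ, ∃ γ : Measure (ℝ × ℝ), IsProbabilityMeasure γ ∧
      γ.map Prod.fst = μp ∧ γ.map Prod.snd = μq ∧
      γ ((Set.Icc (0:ℝ) 1 ×ˢ Set.Icc (0:ℝ) 1)ᶜ) = 0 ∧
      ∫ z : ℝ × ℝ, |z.1 - z.2| ∂γ ≤ (p - q) + (c * (1 - (p - q))) ^ n := by
  obtain ⟨hc0, hc2⟩ := hc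
  have hKm : MeasurableSet (Set.Icc (0:ℝ) 1 ×ˢ Set.Icc (0:ℝ) 1) :=
    measurableSet_Icc.prod measurableSet_Icc
  have hmp : ∫ x, x ∂μp = 1 - p := mean_self_similar c ⟨hc0, hc2⟩ p hp μp hμp hsuppp hssp
  have hmq : ∫ x, x ∂μq = 1 - q := mean_self_similar c ⟨hc0, hc2⟩ q hq μq hμq hsuppq hssq
  have hPsupp : (μp.prod μq) ((Set.Icc (0:ℝ) 1 ×ˢ Set.Icc (0:ℝ) 1)ᶜ) = 0 :=
    prod_supp_zero μp μq measurableSet_Icc measurableSet_Icc hsuppp hsuppq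
  have hPfst : (μp.prod μq).map Prod.fst = μp := by
    rw [Measure.map_fst_prod]; simp
  have hPsnd : (μp.prod μq).map Prod.snd = μq := by
    rw [Measure.map_snd_prod]; simp
  intro n
  induction n with
  | zero =>
    refine ⟨μp.prod μq, inferInstance, hPfst, hPsnd, hPsupp, ?_⟩
    rw [pow_zero]
    refine le_trans (integral_mono_ae (integrable_absdiff _ hPsupp) (integrable_const (1:ℝ)) ?_) ?_
    · filter_upwards [ae_mem_of_compl_zero _ hPsupp] with z hz
      obtain ⟨⟨a1, a2⟩, b1, b2⟩ := hz
      rw [abs_sub_le_iff]; constructor <;> linarith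
    · simp; linarith
  | succ n ih =>
    obtain ⟨γ, hγprob, hγf, hγs, hγsupp, hγcost⟩ := ih
    haveI := hγprob
    set C := ∫ z : ℝ × ℝ, |z.1 - z.2| ∂γ with hC
    have hCnn : 0 ≤ C := integral_nonneg fun z => abs_nonneg _
    have hAS : ∀ ν : Measure (ℝ × ℝ), AEStronglyMeasurable (fun z : ℝ × ℝ => |z.1 - z.2|) ν :=
      fun ν => ((measurable_fst.sub measurable_snd).abs).aestronglyMeasurable
    have mf1 : Measurable (fun z : ℝ × ℝ => ((c * z.1 : ℝ), (c * z.2 : ℝ))) :=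
      (measurable_fst.const_mul c).prodMk (measurable_snd.const_mul c)
    have mf2 : Measurable (fun z : ℝ × ℝ => ((c * z.1 + (1 - c) : ℝ), (c * z.2 + (1 - c) : ℝ))) :=
      ((measurable_fst.const_mul c).add_const _).prodMk ((measurable_snd.const_mul c).add_const _)
    have mf3 : Measurable (fun z : ℝ × ℝ => ((c * z.1 : ℝ), (c * z.2 + (1 - c) : ℝ))) :=
      (measurable_fst.const_mul c).prodMk ((measurable_snd.const_mul c).add_const _)
    set Γ : Measure (ℝ × ℝ) :=
      ENNReal.ofReal q • γ.map (fun z : ℝ × ℝ => ((c * z.1 : ℝ), (c * z.2 : ℝ)))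
      + ENNReal.ofReal (1 - p) • γ.map (fun z : ℝ × ℝ => ((c * z.1 + (1 - c) : ℝ), (c * z.2 + (1 - c) : ℝ)))
      + ENNReal.ofReal (p - q) • (μp.prod μq).map (fun z : ℝ × ℝ => ((c * z.1 : ℝ), (c * z.2 + (1 - c) : ℝ)))
      with hΓ
    -- the six composed marginals
    have c1f : (γ.map (fun z : ℝ × ℝ => ((c * z.1 : ℝ), (c * z.2 : ℝ)))).map Prod.fst
        = μp.map (fun x : ℝ => c * x) := by
      rw [Measure.map_map measurable_fst mf1]
      rw [show (Prod.fst ∘ fun z : ℝ × ℝ => ((c * z.1 : ℝ), (c * z.2 : ℝ)))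
          = (fun x : ℝ => c * x) ∘ Prod.fst from rfl,
        ← Measure.map_map (measurable_const_mul c) measurable_fst, hγf]
    have c1s : (γ.map (fun z : ℝ × ℝ => ((c * z.1 : ℝ), (c * z.2 : ℝ)))).map Prod.snd
        = μq.map (fun x : ℝ => c * x) := by
      rw [Measure.map_map measurable_snd mf1]
      rw [show (Prod.snd ∘ fun z : ℝ × ℝ => ((c * z.1 : ℝ), (c * z.2 : ℝ)))
          = (fun x : ℝ => c * x) ∘ Prod.snd from rfl,
        ← Measure.map_map (measurable_const_mul c) measurable_snd, hγs]
    have c2f : (γ.map (fun z : ℝ × ℝ => ((c * z.1 + (1 - c) : ℝ), (c * z.2 + (1 - c) : ℝ)))).map Prod.fst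
        = μp.map (fun x : ℝ => c * x + (1 - c)) := by
      rw [Measure.map_map measurable_fst mf2]
      rw [show (Prod.fst ∘ fun z : ℝ × ℝ => ((c * z.1 + (1 - c) : ℝ), (c * z.2 + (1 - c) : ℝ)))
          = (fun x : ℝ => c * x + (1 - c)) ∘ Prod.fst from rfl,
        ← Measure.map_map ((measurable_const_mul c).add_const _) measurable_fst, hγf]
    have c2s : (γ.map (fun z : ℝ × ℝ => ((c * z.1 + (1 - c) : ℝ), (c * z.2 + (1 - c) : ℝ)))).map Prod.snd
        = μq.map (fun x : ℝ => c * x + (1 - c)) := by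
      rw [Measure.map_map measurable_snd mf2]
      rw [show (Prod.snd ∘ fun z : ℝ × ℝ => ((c * z.1 + (1 - c) : ℝ), (c * z.2 + (1 - c) : ℝ)))
          = (fun x : ℝ => c * x + (1 - c)) ∘ Prod.snd from rfl,
        ← Measure.map_map ((measurable_const_mul c).add_const _) measurable_snd, hγs]
    have c3f : ((μp.prod μq).map (fun z : ℝ × ℝ => ((c * z.1 : ℝ), (c * z.2 + (1 - c) : ℝ)))).map Prod.fst
        = μp.map (fun x : ℝ => c * x) := by
      rw [Measure.map_map measurable_fst mf3]
      rw [show (Prod.fst ∘ fun z : ℝ × ℝ => ((c * z.1 : ℝ), (c * z.2 + (1 - c) : ℝ)))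
          = (fun x : ℝ => c * x) ∘ Prod.fst from rfl,
        ← Measure.map_map (measurable_const_mul c) measurable_fst, hPfst]
    have c3s : ((μp.prod μq).map (fun z : ℝ × ℝ => ((c * z.1 : ℝ), (c * z.2 + (1 - c) : ℝ)))).map Prod.snd
        = μq.map (fun x : ℝ => c * x + (1 - c)) := by
      rw [Measure.map_map measurable_snd mf3]
      rw [show (Prod.snd ∘ fun z : ℝ × ℝ => ((c * z.1 : ℝ), (c * z.2 + (1 - c) : ℝ)))
          = (fun x : ℝ => c * x + (1 - c)) ∘ Prod.snd from rfl,
        ← Measure.map_map ((measurable_const_mul c).add_const _) measurable_snd, hPsnd]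
    have margf : Γ.map Prod.fst = μp := by
      rw [hΓ, Measure.map_add _ _ measurable_fst, Measure.map_add _ _ measurable_fst,
        Measure.map_smul, Measure.map_smul, Measure.map_smul, c1f, c2f, c3f, add_right_comm,
        ← add_smul, ← ENNReal.ofReal_add hq.1.le (by linarith : (0:ℝ) ≤ p - q),
        show q + (p - q) = p by ring]
      exact hssp.symm
    have margs : Γ.map Prod.snd = μq := by
      rw [hΓ, Measure.map_add _ _ measurable_snd, Measure.map_add _ _ measurable_snd,
        Measure.map_smul, Measure.map_smul, Measure.map_smul, c1s, c2s, c3s, add_assoc,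
        ← add_smul, ← ENNReal.ofReal_add (by linarith [hp.2] : (0:ℝ) ≤ 1 - p)
          (by linarith : (0:ℝ) ≤ p - q),
        show 1 - p + (p - q) = 1 - q by ring]
      exact hssq.symm
    have hprob : IsProbabilityMeasure Γ := by
      refine ⟨?_⟩
      have h2 := congrArg (fun m : Measure ℝ => m Set.univ) margf
      simp only [Measure.map_apply measurable_fst MeasurableSet.univ, Set.preimage_univ] at h2
      rw [h2, measure_univ]
    have z1 : (γ.map (fun z : ℝ × ℝ => ((c * z.1 : ℝ), (c * z.2 : ℝ))))
        ((Set.Icc (0:ℝ) 1 ×ˢ Set.Icc (0:ℝ) 1)ᶜ) = 0 := by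
      rw [Measure.map_apply mf1 hKm.compl]
      refine measure_mono_null ?_ hγsupp
      intro z hz
      simp only [Set.mem_preimage, Set.mem_compl_iff, Set.mem_prod, Set.mem_Icc] at hz ⊢
      intro hzK
      exact hz ⟨⟨mul_nonneg hc0.le hzK.1.1, by nlinarith [hzK.1.2]⟩,
        ⟨mul_nonneg hc0.le hzK.2.1, by nlinarith [hzK.2.2]⟩⟩
    have z2 : (γ.map (fun z : ℝ × ℝ => ((c * z.1 + (1 - c) : ℝ), (c * z.2 + (1 - c) : ℝ))))
        ((Set.Icc (0:ℝ) 1 ×ˢ Set.Icc (0:ℝ) 1)ᶜ) = 0 := by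
      rw [Measure.map_apply mf2 hKm.compl]
      refine measure_mono_null ?_ hγsupp
      intro z hz
      simp only [Set.mem_preimage, Set.mem_compl_iff, Set.mem_prod, Set.mem_Icc] at hz ⊢
      intro hzK
      exact hz ⟨⟨by nlinarith [hzK.1.1, mul_nonneg hc0.le hzK.1.1], by nlinarith [hzK.1.2]⟩,
        ⟨by nlinarith [mul_nonneg hc0.le hzK.2.1], by nlinarith [hzK.2.2]⟩⟩
    have z3 : ((μp.prod μq).map (fun z : ℝ × ℝ => ((c * z.1 : ℝ), (c * z.2 + (1 - c) : ℝ))))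
        ((Set.Icc (0:ℝ) 1 ×ˢ Set.Icc (0:ℝ) 1)ᶜ) = 0 := by
      rw [Measure.map_apply mf3 hKm.compl]
      refine measure_mono_null ?_ hPsupp
      intro z hz
      simp only [Set.mem_preimage, Set.mem_compl_iff, Set.mem_prod, Set.mem_Icc] at hz ⊢
      intro hzK
      exact hz ⟨⟨mul_nonneg hc0.le hzK.1.1, by nlinarith [hzK.1.2]⟩,
        ⟨by nlinarith [mul_nonneg hc0.le hzK.2.1], by nlinarith [hzK.2.2]⟩⟩
    have hsupp' : Γ ((Set.Icc (0:ℝ) 1 ×ˢ Set.Icc (0:ℝ) 1)ᶜ) = 0 := by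
      rw [hΓ, Measure.add_apply, Measure.add_apply, Measure.smul_apply, Measure.smul_apply,
        Measure.smul_apply, z1, z2, z3]
      simp
    -- integrability of the cost on each piece
    have hi1' : Integrable (fun z : ℝ × ℝ => |z.1 - z.2|)
        (γ.map (fun z : ℝ × ℝ => ((c * z.1 : ℝ), (c * z.2 : ℝ)))) := integrable_absdiff _ z1
    have hi2' : Integrable (fun z : ℝ × ℝ => |z.1 - z.2|)
        (γ.map (fun z : ℝ × ℝ => ((c * z.1 + (1 - c) : ℝ), (c * z.2 + (1 - c) : ℝ)))) :=
      integrable_absdiff _ z2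
    have hi3' : Integrable (fun z : ℝ × ℝ => |z.1 - z.2|)
        ((μp.prod μq).map (fun z : ℝ × ℝ => ((c * z.1 : ℝ), (c * z.2 + (1 - c) : ℝ)))) :=
      integrable_absdiff _ z3
    have cost1 : ∫ z : ℝ × ℝ, |z.1 - z.2|
        ∂(γ.map (fun z : ℝ × ℝ => ((c * z.1 : ℝ), (c * z.2 : ℝ)))) = c * C := by
      rw [integral_map mf1.aemeasurable (hAS _), hC, ← integral_const_mul]
      refine integral_congr_ae (ae_of_all _ fun z => ?_)
      show |c * z.1 - c * z.2| = c * |z.1 - z.2|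
      rw [← mul_sub, abs_mul, abs_of_nonneg hc0.le]
    have cost2 : ∫ z : ℝ × ℝ, |z.1 - z.2|
        ∂(γ.map (fun z : ℝ × ℝ => ((c * z.1 + (1 - c) : ℝ), (c * z.2 + (1 - c) : ℝ)))) = c * C := by
      rw [integral_map mf2.aemeasurable (hAS _), hC, ← integral_const_mul]
      refine integral_congr_ae (ae_of_all _ fun z => ?_)
      show |c * z.1 + (1 - c) - (c * z.2 + (1 - c))| = c * |z.1 - z.2|
      rw [show c * z.1 + (1 - c) - (c * z.2 + (1 - c)) = c * (z.1 - z.2) by ring,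
        abs_mul, abs_of_nonneg hc0.le]
    have hiP1 : Integrable (fun z : ℝ × ℝ => z.1) (μp.prod μq) := by
      refine (integrable_const (1:ℝ)).mono' measurable_fst.aestronglyMeasurable ?_
      filter_upwards [ae_mem_of_compl_zero _ hPsupp] with z hz
      rw [Real.norm_eq_abs, abs_le]; exact ⟨by linarith [hz.1.1], hz.1.2⟩
    have hiP2 : Integrable (fun z : ℝ × ℝ => z.2) (μp.prod μq) := by
      refine (integrable_const (1:ℝ)).mono' measurable_snd.aestronglyMeasurable ?_
      filter_upwards [ae_mem_of_compl_zero _ hPsupp] with z hz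
      rw [Real.norm_eq_abs, abs_le]; exact ⟨by linarith [hz.2.1], hz.2.2⟩
    have e1 : ∫ z : ℝ × ℝ, z.1 ∂(μp.prod μq) = 1 - p := by
      have h := integral_map (φ := (Prod.fst : ℝ × ℝ → ℝ)) (μ := μp.prod μq)
        measurable_fst.aemeasurable measurable_id'.aestronglyMeasurable
      rw [hPfst] at h
      rw [← h, hmp]
    have e2 : ∫ z : ℝ × ℝ, z.2 ∂(μp.prod μq) = 1 - q := by
      have h := integral_map (φ := (Prod.snd : ℝ × ℝ → ℝ)) (μ := μp.prod μq)
        measurable_snd.aemeasurable measurable_id'.aestronglyMeasurable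
      rw [hPsnd] at h
      rw [← h, hmq]
    have cost3 : ∫ z : ℝ × ℝ, |z.1 - z.2|
        ∂((μp.prod μq).map (fun z : ℝ × ℝ => ((c * z.1 : ℝ), (c * z.2 + (1 - c) : ℝ))))
        = 1 - c + c * (p - q) := by
      rw [integral_map mf3.aemeasurable (hAS _)]
      have step : ∫ z : ℝ × ℝ, |c * z.1 - (c * z.2 + (1 - c))| ∂(μp.prod μq)
          = ∫ z : ℝ × ℝ, (c * z.2 + (1 - c) - c * z.1) ∂(μp.prod μq) := by
        refine integral_congr_ae ?_
        filter_upwards [ae_mem_of_compl_zero _ hPsupp] with z hz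
        have h1 : c * z.1 ≤ c := by nlinarith [hz.1.2]
        have h2 : 0 ≤ c * z.2 := mul_nonneg hc0.le hz.2.1
        rw [abs_of_nonpos (by linarith), neg_sub]
      rw [step]
      have hI2c : Integrable (fun z : ℝ × ℝ => c * z.2) (μp.prod μq) := hiP2.const_mul c
      have hI1c : Integrable (fun z : ℝ × ℝ => c * z.1) (μp.prod μq) := hiP1.const_mul c
      have hIsum : Integrable (fun z : ℝ × ℝ => c * z.2 + (1 - c)) (μp.prod μq) :=
        hI2c.add (integrable_const _)
      rw [integral_sub hIsum hI1c, integral_add hI2c (integrable_const _), integral_const_mul,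
        integral_const_mul, e1, e2, integral_const]
      simp [measure_univ]
      ring
    have costΓ : ∫ z : ℝ × ℝ, |z.1 - z.2| ∂Γ
        = q * (c * C) + (1 - p) * (c * C) + (p - q) * (1 - c + c * (p - q)) := by
      rw [hΓ, integral_add_measure (integrable_add_measure.mpr
          ⟨hi1'.smul_measure ENNReal.ofReal_ne_top, hi2'.smul_measure ENNReal.ofReal_ne_top⟩)
          (hi3'.smul_measure ENNReal.ofReal_ne_top),
        integral_add_measure (hi1'.smul_measure ENNReal.ofReal_ne_top)
          (hi2'.smul_measure ENNReal.ofReal_ne_top),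
        integral_smul_measure, integral_smul_measure, integral_smul_measure,
        ENNReal.toReal_ofReal hq.1.le, ENNReal.toReal_ofReal (by linarith [hp.2] : (0:ℝ) ≤ 1 - p),
        ENNReal.toReal_ofReal (by linarith : (0:ℝ) ≤ p - q), cost1, cost2, cost3]
      simp [smul_eq_mul]
    refine ⟨Γ, hprob, margf, margs, hsupp', ?_⟩
    rw [costΓ]
    have hL : 0 ≤ c * (1 - (p - q)) := by nlinarith [hp.2, hq.1]
    have hmul : c * (1 - (p - q)) * C
        ≤ c * (1 - (p - q)) * ((p - q) + (c * (1 - (p - q))) ^ n) :=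
      mul_le_mul_of_nonneg_left hγcost hL
    have hpow : (c * (1 - (p - q))) ^ (n + 1) = c * (1 - (p - q)) * (c * (1 - (p - q))) ^ n := by
      ring
    nlinarith [hmul, hpow]

lemma coupling_swap (μ ν : Measure ℝ) (a : ℝ)
    (h : ∃ γ : Measure (ℝ × ℝ), IsProbabilityMeasure γ ∧
      γ.map Prod.fst = μ ∧ γ.map Prod.snd = ν ∧ a = ∫ z : ℝ × ℝ, |z.1 - z.2| ∂γ) :
    ∃ γ : Measure (ℝ × ℝ), IsProbabilityMeasure γ ∧
      γ.map Prod.fst = ν ∧ γ.map Prod.snd = μ ∧ a = ∫ z : ℝ × ℝ, |z.1 - z.2| ∂γ := by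
  obtain ⟨γ, hγ, h1, h2, h3⟩ := h
  haveI := hγ
  refine ⟨γ.map Prod.swap, Measure.isProbabilityMeasure_map measurable_swap.aemeasurable, ?_, ?_, ?_⟩
  · rw [Measure.map_map measurable_fst measurable_swap,
      show ((Prod.fst ∘ Prod.swap : ℝ × ℝ → ℝ)) = Prod.snd from rfl]
    exact h2
  · rw [Measure.map_map measurable_snd measurable_swap,
      show ((Prod.snd ∘ Prod.swap : ℝ × ℝ → ℝ)) = Prod.fst from rfl]
    exact h1
  · rw [h3, integral_map (f := fun z : ℝ × ℝ => |z.1 - z.2|) measurable_swap.aemeasurable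
      ((measurable_fst.sub measurable_snd).abs.aestronglyMeasurable)]
    refine integral_congr_ae (ae_of_all _ fun z => ?_)
    show |z.1 - z.2| = |z.2 - z.1|
    exact abs_sub_comm _ _

lemma wasserstein1_symm (μ ν : Measure ℝ) : wasserstein1 μ ν = wasserstein1 ν μ := by
  unfold wasserstein1
  congr 1
  ext a
  simp only [Set.mem_setOf_eq]
  exact ⟨coupling_swap μ ν a, coupling_swap ν μ a⟩

lemma wasserstein_aux (c : ℝ) (hc : c ∈ Set.Ioc (0:ℝ) (1/2))
    (p q : ℝ) (hp : p ∈ Set.Ioo (0:ℝ) 1) (hq : q ∈ Set.Ioo (0:ℝ) 1) (hlt : q < p)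
    (μp : Measure ℝ) (hμp : IsProbabilityMeasure μp)
    (hsuppp : μp ((Set.Icc (0:ℝ) 1)ᶜ) = 0)
    (hssp : μp = ENNReal.ofReal p • μp.map (fun x : ℝ => c * x)
               + ENNReal.ofReal (1 - p) • μp.map (fun x : ℝ => c * x + (1 - c)))
    (μq : Measure ℝ) (hμq : IsProbabilityMeasure μq)
    (hsuppq : μq ((Set.Icc (0:ℝ) 1)ᶜ) = 0)
    (hssq : μq = ENNReal.ofReal q • μq.map (fun x : ℝ => c * x)
               + ENNReal.ofReal (1 - q) • μq.map (fun x : ℝ => c * x + (1 - c))) :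
    wasserstein1 μp μq = p - q := by
  have hmp : ∫ x, x ∂μp = 1 - p := mean_self_similar c hc p hp μp hμp hsuppp hssp
  have hmq : ∫ x, x ∂μq = 1 - q := mean_self_similar c hc q hq μq hμq hsuppq hssq
  have lower : ∀ a ∈ { a : ℝ | ∃ γ : Measure (ℝ × ℝ), IsProbabilityMeasure γ ∧
      γ.map Prod.fst = μp ∧ γ.map Prod.snd = μq ∧ a = ∫ z : ℝ × ℝ, |z.1 - z.2| ∂γ },
      p - q ≤ a := by
    rintro a ⟨γ, hγ, h1, h2, rfl⟩
    haveI := hγ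
    have hcg := cost_ge γ μp μq hsuppp hsuppq h1 h2
    rw [hmp, hmq, show (1 - p) - (1 - q) = -(p - q) by ring, abs_neg,
      abs_of_pos (by linarith : (0:ℝ) < p - q)] at hcg
    exact hcg
  have hbdd : BddBelow { a : ℝ | ∃ γ : Measure (ℝ × ℝ), IsProbabilityMeasure γ ∧
      γ.map Prod.fst = μp ∧ γ.map Prod.snd = μq ∧ a = ∫ z : ℝ × ℝ, |z.1 - z.2| ∂γ } :=
    ⟨p - q, lower⟩
  have hne : { a : ℝ | ∃ γ : Measure (ℝ × ℝ), IsProbabilityMeasure γ ∧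
      γ.map Prod.fst = μp ∧ γ.map Prod.snd = μq ∧
      a = ∫ z : ℝ × ℝ, |z.1 - z.2| ∂γ }.Nonempty := by
    obtain ⟨γ, hγ, h1, h2, _, _⟩ := exists_good_coupling c hc p q hp hq hlt
      μp hμp hsuppp hssp μq hμq hsuppq hssq 0
    exact ⟨_, γ, hγ, h1, h2, rfl⟩
  unfold wasserstein1
  refine le_antisymm ?_ (le_csInf hne lower)
  refine le_of_forall_pos_le_add fun ε hε => ?_
  have hlam : c * (1 - (p - q)) < 1 := by nlinarith [hc.1, hc.2, hp.2, hq.1]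
  obtain ⟨n, hn⟩ := exists_pow_lt_of_lt_one hε hlam
  obtain ⟨γ, hγ, h1, h2, _, hcost⟩ := exists_good_coupling c hc p q hp hq hlt
    μp hμp hsuppp hssp μq hμq hsuppq hssq n
  refine le_trans (csInf_le hbdd ⟨γ, hγ, h1, h2, rfl⟩) (by linarith)

/-- For the middle-(1−2c) Cantor set construction (t₁ = 0, t₂ = 1 − c), the first
Wasserstein distance between μ_p and μ_q is |p − q|, independent of c. -/
theorem wasserstein1_middle_cantor
    (c : ℝ) (hc : c ∈ Set.Ioc (0:ℝ) (1/2))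
    (p q : ℝ) (hp : p ∈ Set.Ioo (0:ℝ) 1) (hq : q ∈ Set.Ioo (0:ℝ) 1) (hpq : p ≠ q)
    (μp : Measure ℝ) (hμp : IsProbabilityMeasure μp)
    (hsuppp : μp ((Set.Icc (0:ℝ) 1)ᶜ) = 0)
    (hssp : μp = ENNReal.ofReal p • μp.map (fun x : ℝ => c * x)
               + ENNReal.ofReal (1 - p) • μp.map (fun x : ℝ => c * x + (1 - c)))
    (μq : Measure ℝ) (hμq : IsProbabilityMeasure μq)
    (hsuppq : μq ((Set.Icc (0:ℝ) 1)ᶜ) = 0)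
    (hssq : μq = ENNReal.ofReal q • μq.map (fun x : ℝ => c * x)
               + ENNReal.ofReal (1 - q) • μq.map (fun x : ℝ => c * x + (1 - c))) :
    wasserstein1 μp μq = |p - q| := by
  rcases hpq.lt_or_gt with h | h
  · rw [wasserstein1_symm,
      wasserstein_aux c hc q p hq hp h μq hμq hsuppq hssq μp hμp hsuppp hssp,
      abs_of_neg (show p - q < 0 by linarith)]
    ring
  · rw [wasserstein_aux c hc p q hp hq h μp hμp hsuppp hssp μq hμq hsuppq hssq,
      abs_of_pos (show (0:ℝ) < p - q by linarith)]
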